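/- Let m > r ≥ 3 and l ≤ l_{m,r}. If t_r(m,l) < f < C(m,r) − t_r(m,l), then σ_r(m,f) ≤ 1 − 2·(l)_r/l^r. -/

import Mathlib

open Filter Topology
open scoped Topology


open Finset
open scoped Classical

/-- `(n,e) →_r (m,f)`: every `r`-uniform hypergraph on `n` vertices with `e` edges
has an induced sub-hypergraph on `m` vertices with exactly `f` edges. -/
def PairArrows (r n e m f : ℕ) : Prop :=
  ∀ G : Finset (Finset (Fin n)), (∀ s ∈ G, s.card = r) → G.card = e →
    ∃ S : Finset (Fin n), S.card = m ∧ (G.filter (fun t => t ⊆ S)).card = f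

/-- The density `σ_r(m,f)`. -/
noncomputable def sigmaR (r m f : ℕ) : ℝ :=
  Filter.limsup
    (fun n : ℕ =>
      (((Finset.range (n.choose r + 1)).filter (fun e => PairArrows r n e m f)).card : ℝ) /
        (n.choose r : ℝ))
    Filter.atTop
/-- Size of the `i`-th part of the balanced partition of `n` into `l` parts. -/
def partSize (n l i : ℕ) : ℕ := n / l + if i < n % l then 1 else 0

/-- `t_r(n,l)`: number of edges of the complete balanced `l`-partite `r`-graph on `n` vertices. -/
def tEdges (r n l : ℕ) : ℕ :=
  ∑ S ∈ (Finset.range l).powersetCard r, ∏ i ∈ S, partSize n l i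

/-- `l_{m,r}`: the largest `l` with `t_r(m,l) < C(m,r)/2`. -/
noncomputable def lmr (r m : ℕ) : ℕ :=
  Nat.findGreatest (fun l => 2 * tEdges r m l < m.choose r) m


lemma esymm_cons (a : ℕ) (s : Multiset ℕ) (k : ℕ) :
    (a ::ₘ s).esymm (k+1) = a * s.esymm k + s.esymm (k+1) := by
  simp [Multiset.esymm, Multiset.powersetCard_cons, Multiset.sum_map_mul_left]
  ring

lemma esymm_cons_cons (x y : ℕ) (s : Multiset ℕ) (k : ℕ) :
    (x ::ₘ y ::ₘ s).esymm (k+2) = x*y*s.esymm k + (x+y)*s.esymm (k+1) + s.esymm (k+2) := by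
  rw [esymm_cons, esymm_cons, esymm_cons]
  ring

lemma map_partSize_eq (m l : ℕ) (hl : 1 ≤ l) :
    (Multiset.map (partSize m l) (range l).val)
      = Multiset.replicate (m % l) (m / l + 1) + Multiset.replicate (l - m % l) (m / l) := by
  have hs : m % l < l := Nat.mod_lt _ hl
  have h2 : Ico 0 (m % l) ∪ Ico (m % l) l = Ico 0 l :=
    Ico_union_Ico_eq_Ico (Nat.zero_le _) hs.le
  have hdisj : Disjoint (Ico 0 (m % l)) (Ico (m % l) l) := Ico_disjoint_Ico_consecutive _ _ _
  have h1 : (range l).val = (Ico 0 (m % l)).val + (Ico (m % l) l).val := by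
    rw [range_eq_Ico, ← h2, ← disjUnion_eq_union _ _ hdisj]
    rfl
  rw [h1, Multiset.map_add]
  congr 1
  · rw [Multiset.eq_replicate]
    refine ⟨by simp, ?_⟩
    intro b hb
    obtain ⟨i, hi, rfl⟩ := Multiset.mem_map.1 hb
    simp only [Finset.mem_val, mem_Ico] at hi
    simp [partSize, hi.2]
  · rw [Multiset.eq_replicate]
    refine ⟨by simp [Nat.card_Ico], ?_⟩
    intro b hb
    obtain ⟨i, hi, rfl⟩ := Multiset.mem_map.1 hb
    simp only [Finset.mem_val, mem_Ico] at hi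
    simp [partSize, Nat.not_lt.2 hi.1]

lemma tEdges_eq_esymm (r m l : ℕ) :
    tEdges r m l = (Multiset.map (partSize m l) (range l).val).esymm r :=
  (Finset.esymm_map_val _ _ _).symm

lemma balanced_eq (M : Multiset ℕ) (l m : ℕ) (hl : 1 ≤ l) (hcard : Multiset.card M = l)
    (hsum : M.sum = m) (hbal : ∀ x ∈ M, ∀ y ∈ M, x ≤ y + 1) :
    M = Multiset.replicate (m % l) (m / l + 1) + Multiset.replicate (l - m % l) (m / l) := by
  have hM : M ≠ 0 := by
    intro h; rw [h] at hcard; simp at hcard; omega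
  have hne : M.toFinset.Nonempty := by
    rw [Finset.nonempty_iff_ne_empty]
    simpa [Multiset.toFinset_eq_empty] using hM
  set v := M.toFinset.min' hne with hv
  have hvmem : v ∈ M := Multiset.mem_toFinset.1 (M.toFinset.min'_mem hne)
  have hmin : ∀ x ∈ M, v ≤ x := fun x hx => Finset.min'_le _ _ (Multiset.mem_toFinset.2 hx)
  have hval : ∀ x ∈ M, x = v ∨ x = v + 1 := by
    intro x hx
    have h1 := hmin x hx
    have h2 := hbal x hx v hvmem
    omega
  have hsplit : M.filter (fun x => x = v + 1) + M.filter (fun x => ¬ x = v + 1) = M :=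
    Multiset.filter_add_not _ M
  set A := M.filter (fun x => x = v + 1) with hA
  set B := M.filter (fun x => ¬ x = v + 1) with hB
  have hArep : A = Multiset.replicate (Multiset.card A) (v + 1) := by
    rw [Multiset.eq_replicate]
    exact ⟨rfl, fun b hb => (Multiset.mem_filter.1 hb).2⟩
  have hBrep : B = Multiset.replicate (Multiset.card B) v := by
    rw [Multiset.eq_replicate]
    refine ⟨rfl, fun b hb => ?_⟩
    have h1 := Multiset.mem_filter.1 hb
    rcases hval b h1.1 with h | h
    · exact h
    · exact absurd h h1.2
  set c1 := Multiset.card A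
  set c2 := Multiset.card B
  have hcards : c1 + c2 = l := by
    rw [← hcard, ← hsplit]; simp; rfl
  have hsums : c1 * (v + 1) + c2 * v = m := by
    rw [← hsum, ← hsplit, Multiset.sum_add]
    rw [hArep, hBrep]
    simp [Multiset.sum_replicate, mul_comm]
  rcases Nat.eq_zero_or_pos c2 with hc2 | hc2
  · -- all elements are v+1
    have hc1 : c1 = l := by omega
    have hm : m = l * (v + 1) := by
      have h1 := hsums
      rw [hc1, hc2] at h1
      omega
    have hdm : m / l = v + 1 ∧ m % l = 0 := by
      constructor
      · rw [hm, Nat.mul_div_cancel_left _ (by omega : 0 < l)]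
      · rw [hm]; exact Nat.mul_mod_right _ _
    rw [hdm.1, hdm.2]
    simp only [Nat.sub_zero, Multiset.replicate_zero, zero_add]
    rw [← hsplit, hArep, hBrep, hc1]
    simp [hc2]
  · have hc1l : c1 < l := by omega
    have hkey : m / l = v ∧ m % l = c1 := by
      rw [Nat.div_mod_unique (by omega : 0 < l)]
      constructor
      · have e1 : c1 * (v + 1) = c1 * v + c1 := by ring
        have e2 : c1 * v + c2 * v = l * v := by rw [← hcards]; ring
        omega
      · exact hc1l
    have hc2eq : c2 = l - c1 := by omega
    rw [hkey.1, hkey.2, ← hsplit, hArep, hBrep, hc2eq]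

lemma smoothing (y d : ℕ) (s : Multiset ℕ) (k : ℕ) :
    ((y+2+d) ::ₘ y ::ₘ s).esymm (k+2) ≤ ((y+1+d) ::ₘ (y+1) ::ₘ s).esymm (k+2) := by
  rw [esymm_cons_cons, esymm_cons_cons]
  have h1 : (y+2+d) * y ≤ (y+1+d) * (y+1) := by nlinarith
  have h2 : (y+2+d) + y = (y+1+d) + (y+1) := by omega
  rw [h2]
  exact Nat.add_le_add_right (Nat.add_le_add_right (Nat.mul_le_mul_right _ h1) _) _

lemma factA_balanced (r l m : ℕ) (hl : 1 ≤ l) (M : Multiset ℕ)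
    (hc : Multiset.card M = l) (hs : M.sum = m)
    (hbal : ∀ x ∈ M, ∀ y ∈ M, x ≤ y + 1) : M.esymm r = tEdges r m l := by
  rw [tEdges_eq_esymm, map_partSize_eq _ _ hl, balanced_eq M l m hl hc hs hbal]

lemma factA (r l m : ℕ) (hr : 2 ≤ r) (hl : 1 ≤ l) :
    ∀ (N : ℕ) (M : Multiset ℕ), (M.map fun x => x*x).sum ≤ N → Multiset.card M = l →
      M.sum = m → M.esymm r ≤ tEdges r m l := by
  intro N
  induction N with
  | zero =>
    intro M hp hc hs
    refine le_of_eq (factA_balanced r l m hl M hc hs ?_)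
    intro x hx y hy
    have : x * x ≤ 0 := le_trans (Multiset.single_le_sum (by simp) _
      (Multiset.mem_map_of_mem (fun z => z*z) hx)) hp
    have hx0 : x = 0 := by nlinarith
    omega
  | succ N ih =>
    intro M hp hc hs
    by_cases hpair : ∃ x ∈ M, ∃ y ∈ M.erase x, y + 2 ≤ x
    · obtain ⟨x, hx, y, hy, hxy⟩ := hpair
      obtain ⟨d, hd⟩ : ∃ d, x = y + 2 + d := ⟨x - y - 2, by omega⟩
      set M' := (M.erase x).erase y with hM'
      have hM : M = (y+2+d) ::ₘ y ::ₘ M' := by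
        rw [← hd, hM']
        rw [Multiset.cons_erase hy, Multiset.cons_erase hx]
      obtain ⟨k, hk⟩ : ∃ k, r = k + 2 := ⟨r - 2, by omega⟩
      have h1 : M.esymm r ≤ ((y+1+d) ::ₘ (y+1) ::ₘ M').esymm r := by
        rw [hM, hk]; exact smoothing y d M' k
      refine le_trans h1 (ih _ ?_ ?_ ?_)
      · have hpot : (M.map fun x => x*x).sum
            = (y+2+d)*(y+2+d) + (y*y + (M'.map fun x => x*x).sum) := by
          rw [hM]; simp
        have : ((((y+1+d) ::ₘ (y+1) ::ₘ M').map fun x => x*x)).sum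
            = (y+1+d)*(y+1+d) + ((y+1)*(y+1) + (M'.map fun x => x*x).sum) := by simp
        rw [this]
        nlinarith [hpot, hp]
      · have := hc; rw [hM] at this; simpa using this
      · have := hs; rw [hM] at this; simp at this ⊢; omega
    · refine le_of_eq (factA_balanced r l m hl M hc hs ?_)
      intro a ha b hb
      by_cases hab : b = a
      · omega
      · have hbe : b ∈ M.erase a := Multiset.mem_erase_of_ne hab |>.2 hb
        push_neg at hpair
        have := hpair a ha b hbe
        omega

lemma sum_powersetCard_succ (U : Finset ℕ) (a : ℕ → ℕ) (k : ℕ) :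
    (k+1) * ∑ S ∈ U.powersetCard (k+1), ∏ i ∈ S, a i
      = ∑ S ∈ U.powersetCard k, (∏ i ∈ S, a i) * (∑ j ∈ U \ S, a j) := by
  have hL : (k+1) * ∑ S ∈ U.powersetCard (k+1), ∏ i ∈ S, a i
      = ∑ T ∈ U.powersetCard (k+1), ∑ j ∈ T, ∏ i ∈ T, a i := by
    rw [Finset.mul_sum]
    refine sum_congr rfl fun T hT => ?_
    rw [Finset.sum_const, (mem_powersetCard.1 hT).2]
    simp [mul_comm]
  have hR : ∑ S ∈ U.powersetCard k, (∏ i ∈ S, a i) * (∑ j ∈ U \ S, a j)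
      = ∑ S ∈ U.powersetCard k, ∑ j ∈ U \ S, ∏ i ∈ insert j S, a i := by
    refine sum_congr rfl fun S hS => ?_
    rw [Finset.mul_sum]
    refine sum_congr rfl fun j hj => ?_
    rw [Finset.prod_insert (fun hjS => (Finset.mem_sdiff.1 hj).2 hjS)]
    ring
  rw [hL, hR, Finset.sum_sigma', Finset.sum_sigma']
  refine Finset.sum_nbij' (fun p => ⟨p.1.erase p.2, p.2⟩) (fun p => ⟨insert p.2 p.1, p.2⟩)
    ?_ ?_ ?_ ?_ ?_
  · rintro ⟨T, j⟩ hp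
    rw [Finset.mem_sigma] at hp
    obtain ⟨hT, hj⟩ := hp
    rw [mem_powersetCard] at hT
    rw [Finset.mem_sigma, mem_powersetCard]
    refine ⟨⟨subset_trans (Finset.erase_subset _ _) hT.1, ?_⟩, ?_⟩
    · rw [Finset.card_erase_of_mem hj, hT.2]; rfl
    · rw [Finset.mem_sdiff]
      exact ⟨hT.1 hj, Finset.notMem_erase _ _⟩
  · rintro ⟨S, j⟩ hp
    rw [Finset.mem_sigma] at hp
    obtain ⟨hS, hj⟩ := hp
    rw [mem_powersetCard] at hS
    rw [Finset.mem_sdiff] at hj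
    rw [Finset.mem_sigma, mem_powersetCard]
    refine ⟨⟨?_, ?_⟩, Finset.mem_insert_self _ _⟩
    · intro x hx
      rcases Finset.mem_insert.1 hx with rfl | hx
      · exact hj.1
      · exact hS.1 hx
    · rw [Finset.card_insert_of_notMem hj.2, hS.2]
  · rintro ⟨T, j⟩ hp
    rw [Finset.mem_sigma] at hp
    simp [Finset.insert_erase hp.2]
  · rintro ⟨S, j⟩ hp
    rw [Finset.mem_sigma] at hp
    have := (Finset.mem_sdiff.1 hp.2).2
    simp [Finset.erase_insert this]
  · rintro ⟨T, j⟩ hp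
    rw [Finset.mem_sigma] at hp
    simp [Finset.insert_erase hp.2]

lemma sum_sdiff_partSize (l m k : ℕ) (hl : 1 ≤ l) (S : Finset ℕ) (hS : S ⊆ range l)
    (hcard : S.card = k) (hk : k ≤ l) :
    (l - k) * (m - k) ≤ l * ∑ j ∈ range l \ S, partSize m l j := by
  set q := m / l with hq
  set s := m % l with hs
  have hm : m = l * q + s := (Nat.div_add_mod m l).symm
  have hsl : s < l := Nat.mod_lt _ hl
  have hA : (range l \ S).card = l - k := by
    rw [Finset.card_sdiff_of_subset hS, Finset.card_range, hcard]
  have hsum : ∑ j ∈ range l \ S, partSize m l j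
      = (l - k) * q + ((range l \ S).filter (fun j => j < s)).card := by
    unfold partSize
    rw [Finset.sum_add_distrib, Finset.sum_const, hA, ← hq, ← hs, smul_eq_mul]
    congr 1
    rw [Finset.card_filter]
  have hfilt : (range l \ S).filter (fun j => j < s) = range s \ S := by
    ext j
    simp only [Finset.mem_filter, Finset.mem_sdiff, Finset.mem_range]
    constructor
    · rintro ⟨⟨_, h2⟩, h3⟩; exact ⟨h3, h2⟩
    · rintro ⟨h1, h2⟩; exact ⟨⟨lt_of_lt_of_le (lt_of_lt_of_le h1 hsl.le) le_rfl, h2⟩, h1⟩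
  have hge : s - k ≤ ((range l \ S).filter (fun j => j < s)).card := by
    rw [hfilt]
    calc s - k = (range s).card - S.card := by rw [Finset.card_range, hcard]
    _ ≤ _ := Finset.le_card_sdiff _ _
  have hstep : (l - k) * (m - k) ≤ l * ((l - k) * q + (s - k)) := by
    rcases le_or_gt k s with hks | hks
    · have h1 : m - k = l * q + (s - k) := by omega
      rw [h1, Nat.mul_add, Nat.mul_add]
      have e1 : (l - k) * (l * q) = l * ((l - k) * q) := by ring
      rw [e1]
      exact Nat.add_le_add_left (Nat.mul_le_mul_right _ (Nat.sub_le _ _)) _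
    · have h1 : m - k ≤ l * q := by omega
      calc (l - k) * (m - k) ≤ (l - k) * (l * q) := Nat.mul_le_mul_left _ h1
      _ = l * ((l - k) * q) := by ring
      _ ≤ l * ((l - k) * q + (s - k)) := by rw [Nat.mul_add]; exact Nat.le_add_right _ _
  refine le_trans hstep (Nat.mul_le_mul_left _ ?_)
  rw [hsum]
  exact Nat.add_le_add_left hge _

lemma factB (r l m : ℕ) (hl : 1 ≤ l) :
    l.descFactorial r * m.descFactorial r ≤ l ^ r * r.factorial * tEdges r m l := by
  rcases le_or_gt r l with hrl | hlr
  · -- main case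
    have claim : ∀ k, k ≤ r → l.descFactorial k * m.descFactorial k
        ≤ l ^ k * k.factorial * ∑ S ∈ (range l).powersetCard k, ∏ i ∈ S, partSize m l i := by
      intro k
      induction k with
      | zero => simp
      | succ k ih =>
        intro hk1
        have hkr : k ≤ r := by omega
        have hkl : k < l := by omega
        have key1 := sum_powersetCard_succ (range l) (partSize m l) k
        have key2 : (l - k) * (m - k) * (∑ S ∈ (range l).powersetCard k, ∏ i ∈ S, partSize m l i)
            ≤ l * ((k+1) * ∑ S ∈ (range l).powersetCard (k+1), ∏ i ∈ S, partSize m l i) := by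
          rw [key1, Finset.mul_sum, Finset.mul_sum]
          refine Finset.sum_le_sum fun S hS => ?_
          rw [mem_powersetCard] at hS
          calc (l - k) * (m - k) * ∏ i ∈ S, partSize m l i
              = (∏ i ∈ S, partSize m l i) * ((l - k) * (m - k)) := by ring
            _ ≤ (∏ i ∈ S, partSize m l i) * (l * ∑ j ∈ range l \ S, partSize m l j) :=
                Nat.mul_le_mul_left _ (sum_sdiff_partSize l m k hl S hS.1 hS.2 hkl.le)
            _ = l * ((∏ i ∈ S, partSize m l i) * ∑ j ∈ range l \ S, partSize m l j) := by ring
        calc l.descFactorial (k+1) * m.descFactorial (k+1)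
            = (l - k) * (m - k) * (l.descFactorial k * m.descFactorial k) := by
              rw [Nat.descFactorial_succ, Nat.descFactorial_succ]; ring
          _ ≤ (l - k) * (m - k) * (l ^ k * k.factorial *
                ∑ S ∈ (range l).powersetCard k, ∏ i ∈ S, partSize m l i) :=
              Nat.mul_le_mul_left _ (ih hkr)
          _ = l ^ k * k.factorial * ((l - k) * (m - k) *
                ∑ S ∈ (range l).powersetCard k, ∏ i ∈ S, partSize m l i) := by ring
          _ ≤ l ^ k * k.factorial * (l * ((k+1) *
                ∑ S ∈ (range l).powersetCard (k+1), ∏ i ∈ S, partSize m l i)) :=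
              Nat.mul_le_mul_left _ key2
          _ = l ^ (k+1) * (k+1).factorial *
                ∑ S ∈ (range l).powersetCard (k+1), ∏ i ∈ S, partSize m l i := by
              rw [Nat.factorial_succ, pow_succ]; ring
    exact claim r le_rfl
  · have : l.descFactorial r = 0 := Nat.descFactorial_eq_zero_iff_lt.2 hlr
    simp [this]

lemma card_range_mod (l c : ℕ) (hl : 1 ≤ l) (hc : c < l) : ∀ n,
    ((range n).filter (fun x => x % l = c)).card = n / l + if c < n % l then 1 else 0 := by
  intro n
  induction n with
  | zero => simp
  | succ n ih =>
    rw [Finset.range_add_one, Finset.filter_insert]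
    have hmod : n % l < l := Nat.mod_lt _ (by omega)
    have hfacts : ((n+1)/l = n/l ∧ (n+1)%l = n%l+1) ∨
        ((n+1)/l = n/l+1 ∧ (n+1)%l = 0 ∧ n%l+1 = l) := by
      rcases lt_or_eq_of_le (Nat.succ_le_of_lt hmod) with hlt | heq
      · left
        have e : n+1 = (n%l+1) + l*(n/l) := by
          have := Nat.div_add_mod n l; omega
        constructor
        · rw [e, Nat.add_mul_div_left _ _ (by omega : 0 < l), Nat.div_eq_of_lt hlt, Nat.zero_add]
        · rw [e, Nat.add_mul_mod_self_left, Nat.mod_eq_of_lt hlt]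
      · right
        have e : n+1 = l*(n/l + 1) := by
          have h2 := Nat.div_add_mod n l
          rw [Nat.mul_add, Nat.mul_one]; omega
        refine ⟨?_, ?_, heq⟩
        · rw [e, Nat.mul_div_cancel_left _ (by omega : 0 < l)]
        · rw [e]; exact Nat.mul_mod_right _ _
    by_cases h : n % l = c
    · rw [if_pos h, Finset.card_insert_of_notMem (by simp), ih]
      split_ifs <;> omega
    · rw [if_neg h, ih]
      split_ifs <;> omega

lemma card_univ_mod (n l c : ℕ) (hl : 1 ≤ l) (hc : c < l) :
    ((Finset.univ : Finset (Fin n)).filter (fun v : Fin n => (v : ℕ) % l = c)).card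
      = n / l + if c < n % l then 1 else 0 := by
  rw [← card_range_mod l c hl hc n]
  apply Finset.card_bij (fun (v : Fin n) _ => (v : ℕ))
  · intro v hv
    simp only [Finset.mem_filter, Finset.mem_range] at *
    exact ⟨v.isLt, hv.2⟩
  · intro a ha b hb hab
    exact Fin.ext hab
  · intro x hx
    simp only [Finset.mem_filter, Finset.mem_range] at hx
    exact ⟨⟨x, hx.1⟩, by simp [hx.2], rfl⟩

lemma count_rainbow (n l r : ℕ) (hl : 1 ≤ l) (S : Finset (Fin n)) :
    ((Finset.powersetCard r (Finset.univ : Finset (Fin n))).filter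
        (fun t : Finset (Fin n) => Set.InjOn (fun v : Fin n => (v : ℕ) % l) ↑t ∧ t ⊆ S)).card
    = ∑ C ∈ (range l).powersetCard r, ∏ c ∈ C, (S.filter (fun v : Fin n => (v : ℕ) % l = c)).card := by
  classical
  set col : Fin n → ℕ := fun v => (v : ℕ) % l with hcol
  set F0 := (Finset.powersetCard r (Finset.univ : Finset (Fin n))).filter
      (fun t : Finset (Fin n) => Set.InjOn col ↑t ∧ t ⊆ S) with hF0
  have hmemF0 : ∀ t ∈ F0, t.card = r ∧ Set.InjOn col ↑t ∧ t ⊆ S := by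
    intro t ht
    rw [hF0, Finset.mem_filter, Finset.mem_powersetCard] at ht
    exact ⟨ht.1.2, ht.2.1, ht.2.2⟩
  have hfib : ∀ t ∈ F0, t.image col ∈ (range l).powersetCard r := by
    intro t ht
    obtain ⟨hcard, hinj, hsub⟩ := hmemF0 t ht
    rw [Finset.mem_powersetCard]
    constructor
    · intro c hcmem
      obtain ⟨v, _, rfl⟩ := Finset.mem_image.1 hcmem
      exact Finset.mem_range.2 (Nat.mod_lt _ (by omega))
    · rw [Finset.card_image_of_injOn hinj, hcard]
  rw [Finset.card_eq_sum_card_fiberwise (f := fun t : Finset (Fin n) => t.image col)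
      (t := (range l).powersetCard r) hfib]
  refine Finset.sum_congr rfl fun C hC => ?_
  have hCr : C.card = r := (Finset.mem_powersetCard.1 hC).2
  rw [← Finset.card_pi]
  set cls : ℕ → Finset (Fin n) := fun c => S.filter (fun v : Fin n => col v = c) with hcls
  -- membership in fiber
  have hmemFib : ∀ t ∈ F0.filter (fun t : Finset (Fin n) => t.image col = C),
      t.card = r ∧ Set.InjOn col ↑t ∧ t ⊆ S ∧ t.image col = C := by
    intro t ht
    rw [Finset.mem_filter] at ht
    obtain ⟨h1, h2, h3⟩ := hmemF0 t ht.1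
    exact ⟨h1, h2, h3, ht.2⟩
  have hne : ∀ t ∈ F0.filter (fun t : Finset (Fin n) => t.image col = C), ∀ c ∈ C,
      (t.filter (fun v => col v = c)).Nonempty := by
    intro t ht c hc
    obtain ⟨_, _, _, him⟩ := hmemFib t ht
    rw [← him] at hc
    obtain ⟨v, hv, hvc⟩ := Finset.mem_image.1 hc
    exact ⟨v, Finset.mem_filter.2 ⟨hv, hvc⟩⟩
  refine Finset.card_bij'
    (i := fun t ht => fun c hc => (t.filter (fun v => col v = c)).min' (hne t ht c hc))
    (j := fun p _ => C.attach.image (fun c => p c.1 c.2)) ?_ ?_ ?_ ?_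
  · -- hi : image of i lands in pi
    intro t ht
    rw [Finset.mem_pi]
    intro c hc
    have hmin := Finset.min'_mem (t.filter (fun v => col v = c)) (hne t ht c hc)
    rw [Finset.mem_filter] at hmin
    obtain ⟨_, _, hsub, _⟩ := hmemFib t ht
    exact Finset.mem_filter.2 ⟨hsub hmin.1, hmin.2⟩
  · -- hj : j lands in fiber
    intro p hp
    rw [Finset.mem_pi] at hp
    have hval : ∀ c (hc : c ∈ C), p c hc ∈ S ∧ col (p c hc) = c := by
      intro c hc
      have := hp c hc
      rw [hcls, Finset.mem_filter] at this
      exact this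
    have hinj2 : ∀ c1 (h1 : c1 ∈ C) c2 (h2 : c2 ∈ C), p c1 h1 = p c2 h2 → c1 = c2 := by
      intro c1 h1 c2 h2 heq
      have e1 := (hval c1 h1).2
      have e2 := (hval c2 h2).2
      rw [← e1, ← e2, heq]
    have hcardj : (C.attach.image (fun c => p c.1 c.2)).card = r := by
      rw [Finset.card_image_of_injOn, Finset.card_attach, hCr]
      intro x _ y _ hxy
      exact Subtype.ext (hinj2 x.1 x.2 y.1 y.2 hxy)
    rw [Finset.mem_filter, hF0, Finset.mem_filter, Finset.mem_powersetCard]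
    refine ⟨⟨⟨Finset.subset_univ _, hcardj⟩, ?_, ?_⟩, ?_⟩
    · -- InjOn col
      intro x hx y hy hxy
      simp only [Finset.coe_image, Set.mem_image, Finset.mem_coe, Finset.mem_attach,
        true_and] at hx hy
      obtain ⟨c1, rfl⟩ := hx
      obtain ⟨c2, rfl⟩ := hy
      have e1 := (hval c1.1 c1.2).2
      have e2 := (hval c2.1 c2.2).2
      have : c1.1 = c2.1 := by rw [← e1, ← e2, hxy]
      have : c1 = c2 := Subtype.ext this
      rw [this]
    · -- subset S
      intro x hx
      obtain ⟨c, _, rfl⟩ := Finset.mem_image.1 hx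
      exact (hval c.1 c.2).1
    · -- image col = C
      apply Finset.Subset.antisymm
      · intro c hc
        obtain ⟨v, hv, rfl⟩ := Finset.mem_image.1 hc
        obtain ⟨c', _, rfl⟩ := Finset.mem_image.1 hv
        rw [(hval c'.1 c'.2).2]
        exact c'.2
      · intro c hc
        refine Finset.mem_image.2 ⟨p c hc, ?_, (hval c hc).2⟩
        exact Finset.mem_image.2 ⟨⟨c, hc⟩, Finset.mem_attach _ _, rfl⟩
  · -- left inverse
    intro t ht
    have hsubt : C.attach.image
        (fun c => (t.filter (fun v => col v = c.1)).min' (hne t ht c.1 c.2)) ⊆ t := by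
      intro v hv
      obtain ⟨c, _, rfl⟩ := Finset.mem_image.1 hv
      have hmin := Finset.min'_mem (t.filter (fun v => col v = c.1)) (hne t ht c.1 c.2)
      exact (Finset.mem_filter.1 hmin).1
    obtain ⟨hcardt, hinjt, _, himt⟩ := hmemFib t ht
    apply Finset.eq_of_subset_of_card_le hsubt
    rw [hcardt, Finset.card_image_of_injOn, Finset.card_attach, hCr]
    intro x _ y _ hxy
    have ex := (Finset.mem_filter.1 (Finset.min'_mem _ (hne t ht x.1 x.2))).2
    have ey := (Finset.mem_filter.1 (Finset.min'_mem _ (hne t ht y.1 y.2))).2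
    beta_reduce at hxy
    refine Subtype.ext ?_
    rw [← ex, ← ey, hxy]
  · -- right inverse
    intro p hp
    funext c hc
    have hsingle : (C.attach.image (fun c => p c.1 c.2)).filter (fun v => col v = c)
        = {p c hc} := by
      have hval : ∀ c' (hc' : c' ∈ C), p c' hc' ∈ S ∧ col (p c' hc') = c' := by
        intro c' hc'
        have := Finset.mem_pi.1 hp c' hc'
        rw [hcls, Finset.mem_filter] at this
        exact this
      ext v
      rw [Finset.mem_filter, Finset.mem_singleton]
      constructor
      · rintro ⟨hv, hvc⟩
        obtain ⟨c', _, rfl⟩ := Finset.mem_image.1 hv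
        have : c'.1 = c := by rw [← (hval c'.1 c'.2).2, hvc]
        cases c' with
        | mk c'' hc'' => simp only at this; subst this; rfl
      · rintro rfl
        exact ⟨Finset.mem_image.2 ⟨⟨c, hc⟩, Finset.mem_attach _ _, rfl⟩, (hval c hc).2⟩
    have haux : ∀ (s : Finset (Fin n)) (h : s.Nonempty) (a : Fin n), s = {a} → s.min' h = a := by
      rintro s h a rfl
      exact Finset.min'_singleton _
    exact haux _ _ _ hsingle

lemma tendsto_inv_shift (a : ℝ) : Tendsto (fun n : ℕ => ((n:ℝ)+a)⁻¹) atTop (𝓝 0) :=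
  (tendsto_atTop_add_const_right atTop a tendsto_natCast_atTop_atTop).inv_tendsto_atTop

lemma tendsto_shift_ratio (a : ℝ) : Tendsto (fun n : ℕ => (n:ℝ)/((n:ℝ)+a)) atTop (𝓝 1) := by
  have h1 : Tendsto (fun n : ℕ => 1 - a*((n:ℝ)+a)⁻¹) atTop (𝓝 1) := by
    have := (tendsto_inv_shift a).const_mul a
    simpa using tendsto_const_nhds.sub this
  refine h1.congr' ?_
  filter_upwards [tendsto_natCast_atTop_atTop.eventually_gt_atTop (|a|)] with n hn
  have hne : (n:ℝ) + a ≠ 0 := by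
    have : -|a| ≤ a := neg_abs_le a
    nlinarith [abs_nonneg a]
  field_simp
  ring

lemma tendsto_floor_div (l : ℕ) (hl : 1 ≤ l) :
    Tendsto (fun n : ℕ => ((n / l : ℕ) : ℝ)/(n:ℝ)) atTop (𝓝 (1/(l:ℝ))) := by
  have hl0 : (0:ℝ) < l := by exact_mod_cast hl
  apply tendsto_of_tendsto_of_tendsto_of_le_of_le'
    (g := fun n : ℕ => 1/(l:ℝ) - 1/(n:ℝ)) (h := fun _ : ℕ => 1/(l:ℝ))
  · simpa using tendsto_const_nhds.sub (tendsto_one_div_atTop_nhds_zero_nat (𝕜 := ℝ))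
  · exact tendsto_const_nhds
  · filter_upwards [eventually_ge_atTop 1] with n hn
    have hn0 : (0:ℝ) < n := by exact_mod_cast hn
    have hnat : n ≤ l * (n / l) + l := by
      have h1 := Nat.div_add_mod n l
      have h2 := Nat.mod_lt n (show 0 < l by omega)
      omega
    have hreal : (n:ℝ) - l ≤ l * ((n / l : ℕ):ℝ) := by
      have := (Nat.cast_le (α := ℝ)).2 hnat
      push_cast at this
      linarith
    rw [div_sub_div _ _ (ne_of_gt hl0) (ne_of_gt hn0), div_le_div_iff₀ (by positivity) hn0]
    have h0 : (0:ℝ) ≤ ((n / l : ℕ):ℝ) := by positivity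
    nlinarith
  · filter_upwards [eventually_ge_atTop 1] with n hn
    have hn0 : (0:ℝ) < n := by exact_mod_cast hn
    have h1 : ((n / l : ℕ):ℝ) ≤ (n:ℝ)/(l:ℝ) := Nat.cast_div_le
    have h2 : ((n / l : ℕ):ℝ) * l ≤ n := (le_div_iff₀ hl0).1 h1
    rw [div_le_div_iff₀ hn0 hl0]
    linarith

lemma tEdges_le (r n l : ℕ) : tEdges r n l ≤ l.choose r * (n/l + 1)^r := by
  unfold tEdges
  calc ∑ S ∈ (range l).powersetCard r, ∏ i ∈ S, partSize n l i
      ≤ ∑ _S ∈ (range l).powersetCard r, (n/l + 1)^r := by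
        refine Finset.sum_le_sum fun S hS => ?_
        have hc := (Finset.mem_powersetCard.1 hS).2
        calc ∏ i ∈ S, partSize n l i ≤ (n/l+1)^S.card :=
              Finset.prod_le_pow_card _ _ _ (fun i _ => by unfold partSize; split_ifs <;> omega)
          _ = (n/l+1)^r := by rw [hc]
    _ = l.choose r * (n/l + 1)^r := by
        rw [Finset.sum_const, Finset.card_powersetCard, Finset.card_range, smul_eq_mul]

lemma le_tEdges (r n l : ℕ) : l.choose r * (n/l)^r ≤ tEdges r n l := by
  unfold tEdges
  calc l.choose r * (n/l)^r
      = ∑ _S ∈ (range l).powersetCard r, (n/l)^r := by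
        rw [Finset.sum_const, Finset.card_powersetCard, Finset.card_range, smul_eq_mul]
    _ ≤ ∑ S ∈ (range l).powersetCard r, ∏ i ∈ S, partSize n l i := by
        refine Finset.sum_le_sum fun S hS => ?_
        have hc := (Finset.mem_powersetCard.1 hS).2
        calc (n/l)^r = (n/l)^S.card := by rw [hc]
          _ ≤ ∏ i ∈ S, partSize n l i :=
              Finset.pow_card_le_prod _ _ _ (fun i _ => by unfold partSize; split_ifs <;> omega)

lemma choose_mul_factorial_cast (n r : ℕ) :
    ((n.choose r : ℕ) : ℝ) * (r.factorial : ℝ) = (n.descFactorial r : ℝ) := by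
  rw [Nat.descFactorial_eq_factorial_mul_choose]
  push_cast
  ring

lemma descFactorial_le_pow_cast (n r : ℕ) : ((n.descFactorial r : ℕ) : ℝ) ≤ (n:ℝ)^r := by
  exact_mod_cast Nat.descFactorial_le_pow n r

lemma pow_le_descFactorial_cast (n r : ℕ) (h : r ≤ n) :
    ((n:ℝ)+1-r)^r ≤ ((n.descFactorial r : ℕ) : ℝ) := by
  have hnat : (n+1-r)^r ≤ n.descFactorial r := by
    rw [Nat.descFactorial_eq_prod_range]
    have he : (n+1-r)^r = ∏ _i ∈ Finset.range r, (n+1-r) := by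
      rw [Finset.prod_const, Finset.card_range]
    rw [he]
    exact Finset.prod_le_prod' fun i hi => by
      have := Finset.mem_range.1 hi; omega
  calc ((n:ℝ)+1-r)^r = (((n+1-r:ℕ)):ℝ)^r := by
        rw [Nat.cast_sub (by omega), Nat.cast_add, Nat.cast_one]
    _ ≤ _ := by exact_mod_cast hnat

lemma tendsto_ratio (r l : ℕ) (hr : 1 ≤ r) (hl : 1 ≤ l) :
    Tendsto (fun n : ℕ => (tEdges r n l : ℝ)/(n.choose r : ℝ)) atTop
      (𝓝 ((l.descFactorial r : ℝ)/(l:ℝ)^r)) := by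
  have hl0 : (0:ℝ) < l := by exact_mod_cast hl
  have hrf : (0:ℝ) < r.factorial := by exact_mod_cast r.factorial_pos
  set B : ℝ := (l.choose r : ℝ) with hB
  have hB0 : 0 ≤ B := by positivity
  have hD : (l.descFactorial r : ℝ)/(l:ℝ)^r = (B * r.factorial) * (1/(l:ℝ))^r := by
    rw [← choose_mul_factorial_cast l r]
    rw [div_pow, one_pow]
    field_simp
    rfl
  rw [hD]
  have hq := tendsto_floor_div l hl
  set a : ℝ := 1 - (r:ℝ) with ha
  have hUin : Tendsto (fun n : ℕ => (((n/l:ℕ):ℝ)+1)/((n:ℝ)+a)) atTop (𝓝 (1/(l:ℝ))) := by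
    have base : Tendsto (fun n : ℕ =>
        (((n/l:ℕ):ℝ)/(n:ℝ))*((n:ℝ)/((n:ℝ)+a)) + ((n:ℝ)+a)⁻¹) atTop
        (𝓝 ((1/(l:ℝ))*1 + 0)) :=
      (hq.mul (tendsto_shift_ratio a)).add (tendsto_inv_shift a)
    refine Filter.Tendsto.congr'
      (f₁ := fun n : ℕ => (((n/l:ℕ):ℝ)/(n:ℝ))*((n:ℝ)/((n:ℝ)+a)) + ((n:ℝ)+a)⁻¹) ?_
      (by simpa using base)
    filter_upwards [eventually_ge_atTop (r+1)] with n hn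
    have hn0 : (0:ℝ) < n := by
      have : (0:ℕ) < n := by omega
      exact_mod_cast this
    have hna : (0:ℝ) < (n:ℝ) + a := by
      rw [ha]
      have : (r:ℝ) + 1 ≤ n := by exact_mod_cast hn
      linarith
    show _ = _
    field_simp
  apply tendsto_of_tendsto_of_tendsto_of_le_of_le'
    (g := fun n : ℕ => (B * r.factorial) * (((n/l:ℕ):ℝ)/(n:ℝ))^r)
    (h := fun n : ℕ => (B * r.factorial) * ((((n/l:ℕ):ℝ)+1)/((n:ℝ)+a))^r)
  · exact (hq.pow r).const_mul _
  · exact (hUin.pow r).const_mul _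
  · -- lower bound
    filter_upwards [eventually_ge_atTop (r+1)] with n hn
    have hn0 : (0:ℝ) < n := by
      have : (0:ℕ) < n := by omega
      exact_mod_cast this
    have hnr0 : (0:ℝ) < (n:ℝ)^r := by positivity
    have hC0 : (0:ℝ) < (n.choose r : ℝ) := by
      exact_mod_cast Nat.choose_pos (by omega : r ≤ n)
    have ht : B * (((n/l:ℕ)):ℝ)^r ≤ (tEdges r n l : ℝ) := by
      rw [hB]; exact_mod_cast le_tEdges r n l
    have hCle : (n.choose r : ℝ) * r.factorial ≤ (n:ℝ)^r :=
      (choose_mul_factorial_cast n r).le.trans (descFactorial_le_pow_cast n r)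
    rw [le_div_iff₀ hC0]
    calc (B * r.factorial) * (((n/l:ℕ):ℝ)/(n:ℝ))^r * (n.choose r : ℝ)
        = (B * (((n/l:ℕ)):ℝ)^r) * (((n.choose r : ℝ) * r.factorial)/ (n:ℝ)^r) := by
          rw [div_pow]; field_simp
      _ ≤ (B * (((n/l:ℕ)):ℝ)^r) * 1 := by
          refine mul_le_mul_of_nonneg_left ?_ (by positivity)
          rw [div_le_one hnr0]; exact hCle
      _ = B * (((n/l:ℕ)):ℝ)^r := by ring
      _ ≤ (tEdges r n l : ℝ) := ht
  · -- upper bound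
    filter_upwards [eventually_ge_atTop (r+1)] with n hn
    have hna : (0:ℝ) < (n:ℝ) + a := by
      rw [ha]
      have : (r:ℝ) + 1 ≤ n := by exact_mod_cast hn
      linarith
    have hna0 : (0:ℝ) < ((n:ℝ)+a)^r := by positivity
    have hC0 : (0:ℝ) < (n.choose r : ℝ) := by
      exact_mod_cast Nat.choose_pos (by omega : r ≤ n)
    have ht : (tEdges r n l : ℝ) ≤ B * ((((n/l:ℕ)):ℝ)+1)^r := by
      rw [hB]; exact_mod_cast tEdges_le r n l
    have hCge : ((n:ℝ)+a)^r ≤ (n.choose r : ℝ) * r.factorial := by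
      rw [choose_mul_factorial_cast n r, ha]
      have : (n:ℝ) + (1 - (r:ℝ)) = (n:ℝ) + 1 - r := by ring
      rw [this]
      exact pow_le_descFactorial_cast n r (by omega)
    rw [div_le_iff₀ hC0]
    calc (tEdges r n l : ℝ) ≤ B * ((((n/l:ℕ)):ℝ)+1)^r := ht
      _ ≤ (B * ((((n/l:ℕ)):ℝ)+1)^r) * (((n.choose r : ℝ) * r.factorial)/((n:ℝ)+a)^r) := by
          nth_rewrite 1 [← mul_one (B * ((((n/l:ℕ)):ℝ)+1)^r)]
          refine mul_le_mul_of_nonneg_left ?_ (by positivity)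
          rw [le_div_iff₀ hna0]; simpa using hCge
      _ = (B * r.factorial) * ((((n/l:ℕ):ℝ)+1)/((n:ℝ)+a))^r * (n.choose r : ℝ) := by
          rw [div_pow]; field_simp


noncomputable def Kn (r n l : ℕ) : Finset (Finset (Fin n)) :=
  (Finset.powersetCard r (Finset.univ : Finset (Fin n))).filter
    (fun t : Finset (Fin n) => Set.InjOn (fun v : Fin n => (v : ℕ) % l) ↑t)

lemma restr_le (r n l m : ℕ) (hl : 1 ≤ l) (hr2 : 2 ≤ r) (S : Finset (Fin n))
    (hS : S.card = m) :
    ((Kn r n l).filter (fun t => t ⊆ S)).card ≤ tEdges r m l := by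
  unfold Kn
  rw [Finset.filter_filter, count_rainbow n l r hl S]
  rw [← Finset.esymm_map_val (fun c => (S.filter (fun v : Fin n => (v:ℕ) % l = c)).card)
    (range l) r]
  refine factA r l m hr2 hl _ _ le_rfl ?_ ?_
  · simp
  · have hsum : ∑ c ∈ range l, (S.filter (fun v : Fin n => (v:ℕ) % l = c)).card = S.card :=
      (Finset.card_eq_sum_card_fiberwise (fun v _ =>
        Finset.mem_range.2 (Nat.mod_lt _ (by omega)))).symm
    calc (Multiset.map (fun c => (S.filter (fun v : Fin n => (v:ℕ) % l = c)).card)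
          (range l).val).sum
        = ∑ c ∈ range l, (S.filter (fun v : Fin n => (v:ℕ) % l = c)).card := rfl
      _ = m := by rw [hsum, hS]

lemma Kn_card (r n l : ℕ) (hl : 1 ≤ l) : (Kn r n l).card = tEdges r n l := by
  have h0 : Kn r n l = (Kn r n l).filter (fun t => t ⊆ (Finset.univ : Finset (Fin n))) := by
    rw [Finset.filter_true_of_mem]
    intro t _
    exact Finset.subset_univ t
  rw [h0]
  unfold Kn
  rw [Finset.filter_filter, count_rainbow n l r hl Finset.univ]
  unfold tEdges
  refine Finset.sum_congr rfl fun C hC => Finset.prod_congr rfl fun c hc => ?_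
  have hcl : c < l := Finset.mem_range.1 ((Finset.mem_powersetCard.1 hC).1 hc)
  rw [card_univ_mod n l c hl hcl]
  rfl

lemma not_arrows_low (r n l m f : ℕ) (hl : 1 ≤ l) (hr2 : 2 ≤ r)
    (hf1 : tEdges r m l < f) (e : ℕ) (he : e ≤ tEdges r n l) :
    ¬ PairArrows r n e m f := by
  intro hP
  obtain ⟨G, hG, hGcard⟩ : ∃ G ⊆ Kn r n l, G.card = e :=
    Finset.exists_subset_card_eq (by rw [Kn_card r n l hl]; exact he)
  obtain ⟨S, hS, hSf⟩ := hP G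
    (fun s hs => (Finset.mem_powersetCard.1 (Finset.mem_filter.1 (hG hs)).1).2) hGcard
  have hle : (G.filter (fun t => t ⊆ S)).card ≤ tEdges r m l :=
    le_trans (Finset.card_le_card (Finset.filter_subset_filter _ hG))
      (restr_le r n l m hl hr2 S hS)
  omega

lemma not_arrows_high (r n l m f : ℕ) (hl : 1 ≤ l) (hr2 : 2 ≤ r)
    (hf2 : f < m.choose r - tEdges r m l) (e : ℕ)
    (he1 : n.choose r - tEdges r n l ≤ e) (he2 : e ≤ n.choose r) :
    ¬ PairArrows r n e m f := by
  intro hP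
  have hCn : (Finset.powersetCard r (Finset.univ : Finset (Fin n))).card = n.choose r := by
    rw [Finset.card_powersetCard, Finset.card_univ, Fintype.card_fin]
  obtain ⟨H, hH, hHcard⟩ : ∃ H ⊆ Kn r n l, H.card = n.choose r - e :=
    Finset.exists_subset_card_eq (by rw [Kn_card r n l hl]; omega)
  have hHsub : H ⊆ Finset.powersetCard r (Finset.univ : Finset (Fin n)) :=
    fun t ht => (Finset.mem_filter.1 (hH ht)).1
  set G := Finset.powersetCard r (Finset.univ : Finset (Fin n)) \ H with hGdef
  have hGcard : G.card = e := by
    rw [hGdef, Finset.card_sdiff_of_subset hHsub, hCn, hHcard]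
    omega
  obtain ⟨S, hSc, hSf⟩ := hP G
    (fun s hs => (Finset.mem_powersetCard.1 (Finset.mem_sdiff.1 hs).1).2) hGcard
  have key : G.filter (fun t => t ⊆ S)
      = (Finset.powersetCard r (Finset.univ : Finset (Fin n))).filter (fun t => t ⊆ S)
        \ (H.filter (fun t => t ⊆ S)) := by
    ext t
    simp only [hGdef, Finset.mem_sdiff, Finset.mem_filter]
    tauto
  have h1 : ((Finset.powersetCard r (Finset.univ : Finset (Fin n))).filter
      (fun t => t ⊆ S)).card = m.choose r := by
    have he : (Finset.powersetCard r (Finset.univ : Finset (Fin n))).filter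
        (fun t => t ⊆ S) = Finset.powersetCard r S := by
      ext t
      simp only [Finset.mem_filter, Finset.mem_powersetCard]
      constructor
      · rintro ⟨⟨_, hc⟩, hsub⟩; exact ⟨hsub, hc⟩
      · rintro ⟨hsub, hc⟩; exact ⟨⟨Finset.subset_univ _, hc⟩, hsub⟩
    rw [he, Finset.card_powersetCard, hSc]
  have h2 : (H.filter (fun t => t ⊆ S)).card ≤ tEdges r m l :=
    le_trans (Finset.card_le_card (Finset.filter_subset_filter _ hH))
      (restr_le r n l m hl hr2 S hSc)
  have h3 : (G.filter (fun t => t ⊆ S)).card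
      = m.choose r - (H.filter (fun t => t ⊆ S)).card := by
    rw [key, Finset.card_sdiff_of_subset, h1]
    exact Finset.filter_subset_filter _ hHsub
  have h4 : (H.filter (fun t => t ⊆ S)).card ≤ m.choose r := by
    rw [← h1]
    exact Finset.card_le_card (Finset.filter_subset_filter _ hHsub)
  omega

lemma arrows_subset_Ioo (r n l m f : ℕ) (hl : 1 ≤ l) (hr2 : 2 ≤ r)
    (hf1 : tEdges r m l < f) (hf2 : f < m.choose r - tEdges r m l) :
    ((Finset.range (n.choose r + 1)).filter (fun e => PairArrows r n e m f))
      ⊆ Finset.Ioo (tEdges r n l) (n.choose r - tEdges r n l) := by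
  intro e he
  rw [Finset.mem_filter, Finset.mem_range] at he
  rw [Finset.mem_Ioo]
  constructor
  · by_contra hc
    exact not_arrows_low r n l m f hl hr2 hf1 e (by omega) he.2
  · by_contra hc
    exact not_arrows_high r n l m f hl hr2 hf2 e (by omega) (by omega) he.2

lemma tEdges_eq_zero (r m l : ℕ) (h : l < r) : tEdges r m l = 0 := by
  unfold tEdges
  rw [show (range l).powersetCard r = ∅ from Finset.powersetCard_eq_empty.2
    (by rw [Finset.card_range]; exact h)]
  rfl

lemma u_nonneg (r m f : ℕ) : ∀ n : ℕ, (0:ℝ) ≤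
    (((Finset.range (n.choose r + 1)).filter (fun e => PairArrows r n e m f)).card : ℝ) /
      (n.choose r : ℝ) := by
  intro n
  positivity

lemma u_le_two (r m f : ℕ) : ∀ n : ℕ,
    (((Finset.range (n.choose r + 1)).filter (fun e => PairArrows r n e m f)).card : ℝ) /
      (n.choose r : ℝ) ≤ 2 := by
  intro n
  rcases Nat.eq_zero_or_pos (n.choose r) with h | h
  · rw [h]; simp
  · have hC0 : (0:ℝ) < (n.choose r : ℝ) := by exact_mod_cast h
    rw [div_le_iff₀ hC0]
    have hcard : ((Finset.range (n.choose r + 1)).filter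
        (fun e => PairArrows r n e m f)).card ≤ n.choose r + 1 :=
      le_trans (Finset.card_filter_le _ _) (by rw [Finset.card_range])
    have h1 : (1:ℝ) ≤ (n.choose r : ℝ) := by exact_mod_cast h
    have h2 : (((Finset.range (n.choose r + 1)).filter
        (fun e => PairArrows r n e m f)).card : ℝ) ≤ (n.choose r : ℝ) + 1 := by
      exact_mod_cast hcard
    linarith

theorem sigma_le_one_sub_two_ratio (r m l f : ℕ) (hr : 3 ≤ r) (hm : r < m)
    (hl : l ≤ lmr r m) (hf1 : tEdges r m l < f) (hf2 : f < m.choose r - tEdges r m l) :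
    sigmaR r m f ≤ 1 - 2 * (Nat.descFactorial l r : ℝ) / (l : ℝ) ^ r := by
  have hr2 : 2 ≤ r := by omega
  rcases Nat.eq_zero_or_pos l with rfl | hl
  · -- l = 0
    have hz : Nat.descFactorial 0 r = 0 := Nat.descFactorial_eq_zero_iff_lt.2 (by omega)
    have hRHS : (1:ℝ) - 2 * ((Nat.descFactorial 0 r : ℕ) : ℝ) / ((0:ℕ) : ℝ) ^ r = 1 := by
      rw [hz]; norm_num
    rw [hRHS]
    have ht0 : tEdges r m 0 = 0 := tEdges_eq_zero r m 0 (by omega)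
    have ht1 : tEdges r m 1 = 0 := tEdges_eq_zero r m 1 (by omega)
    unfold sigmaR
    refine Filter.limsup_le_of_le (Filter.isCoboundedUnder_le_of_le _ (u_nonneg r m f)) ?_
    filter_upwards [eventually_ge_atTop r] with n hn
    have hCn0 : 0 < n.choose r := Nat.choose_pos hn
    have hC0 : (0:ℝ) < (n.choose r : ℝ) := by exact_mod_cast hCn0
    have hsub := arrows_subset_Ioo r n 1 m f le_rfl hr2 (by omega) (by omega)
    have hcard : ((Finset.range (n.choose r + 1)).filter
        (fun e => PairArrows r n e m f)).card ≤ n.choose r := by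
      have h1 := Finset.card_le_card hsub
      rw [Nat.card_Ioo] at h1
      omega
    rw [div_le_one hC0]
    exact_mod_cast hcard
  · -- main case
    have h2t : 2 * tEdges r m l < m.choose r := by omega
    have hB := factB r l m hl
    have hmd : 0 < m.descFactorial r := by
      rw [Nat.descFactorial_eq_factorial_mul_choose]
      exact Nat.mul_pos r.factorial_pos (Nat.choose_pos (by omega))
    have hlr0 : 0 < l ^ r := Nat.pow_pos hl
    have hltr : 2 * l.descFactorial r < l ^ r := by
      have h1 : 2 * tEdges r m l * r.factorial < m.choose r * r.factorial :=
        mul_lt_mul_of_pos_right h2t r.factorial_pos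
      have h2 : m.choose r * r.factorial = m.descFactorial r := by
        rw [Nat.descFactorial_eq_factorial_mul_choose]; ring
      have h3 : 2 * tEdges r m l * r.factorial < m.descFactorial r := by rw [← h2]; exact h1
      have h4 : l ^ r * (2 * tEdges r m l * r.factorial) < l ^ r * m.descFactorial r :=
        mul_lt_mul_of_pos_left h3 hlr0
      have h5 : (2 * l.descFactorial r) * m.descFactorial r
          ≤ l ^ r * (2 * tEdges r m l * r.factorial) := by
        calc (2 * l.descFactorial r) * m.descFactorial r
            = 2 * (l.descFactorial r * m.descFactorial r) := by ring
          _ ≤ 2 * (l ^ r * r.factorial * tEdges r m l) := Nat.mul_le_mul_left _ hB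
          _ = l ^ r * (2 * tEdges r m l * r.factorial) := by ring
      have h6 : (2 * l.descFactorial r) * m.descFactorial r < (l ^ r) * m.descFactorial r :=
        lt_of_le_of_lt h5 h4
      exact lt_of_mul_lt_mul_right h6 (Nat.zero_le _)
    -- real part
    set D : ℝ := ((l.descFactorial r : ℕ) : ℝ) / (l : ℝ) ^ r with hD
    have hlR0 : (0:ℝ) < (l:ℝ) ^ r := by
      have : (0:ℝ) < (l:ℝ) := by exact_mod_cast hl
      positivity
    have hDhalf : 2 * D < 1 := by
      rw [hD, mul_div_assoc'] 
      rw [div_lt_one hlR0]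
      exact_mod_cast hltr
    have htend := tendsto_ratio r l (by omega) hl
    have hgoal : (1:ℝ) - 2 * ((Nat.descFactorial l r : ℕ) : ℝ) / (l : ℝ) ^ r = 1 - 2 * D := by
      rw [hD, mul_div_assoc]
    rw [hgoal]
    refine le_of_forall_pos_le_add fun ε hε => ?_
    unfold sigmaR
    refine Filter.limsup_le_of_le (Filter.isCoboundedUnder_le_of_le _ (u_nonneg r m f)) ?_
    have hF2 : ∀ᶠ n : ℕ in atTop, D - ε/2 < (tEdges r n l : ℝ) / (n.choose r : ℝ) :=
      htend.eventually_const_lt (by linarith)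
    have hF3 : ∀ᶠ n : ℕ in atTop, (tEdges r n l : ℝ) / (n.choose r : ℝ) < 1/2 :=
      htend.eventually_lt_const (by linarith)
    filter_upwards [hF2, hF3, eventually_ge_atTop r] with n h2 h3 hn
    have hCn0 : 0 < n.choose r := Nat.choose_pos hn
    have hC0 : (0:ℝ) < (n.choose r : ℝ) := by exact_mod_cast hCn0
    have h2tn : 2 * tEdges r n l < n.choose r := by
      have h4 := (div_lt_iff₀ hC0).1 h3
      have h5 : (2 * tEdges r n l : ℝ) < (n.choose r : ℝ) := by
        push_cast
        push_cast at h4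
        linarith
      exact_mod_cast h5
    have hsub := arrows_subset_Ioo r n l m f hl hr2 hf1 hf2
    have hcard : ((Finset.range (n.choose r + 1)).filter
        (fun e => PairArrows r n e m f)).card + 2 * tEdges r n l + 1 ≤ n.choose r := by
      have h1 := Finset.card_le_card hsub
      rw [Nat.card_Ioo] at h1
      omega
    have hcardR : (((Finset.range (n.choose r + 1)).filter
        (fun e => PairArrows r n e m f)).card : ℝ)
        ≤ (n.choose r : ℝ) - 2 * (tEdges r n l : ℝ) := by
      have := (Nat.cast_le (α := ℝ)).2 hcard
      push_cast at this
      linarith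
    calc (((Finset.range (n.choose r + 1)).filter
          (fun e => PairArrows r n e m f)).card : ℝ) / (n.choose r : ℝ)
        ≤ ((n.choose r : ℝ) - 2 * (tEdges r n l : ℝ)) / (n.choose r : ℝ) := by
          exact div_le_div_of_nonneg_right hcardR hC0.le |>.trans_eq rfl
      _ = 1 - 2 * ((tEdges r n l : ℝ) / (n.choose r : ℝ)) := by
          field_simp
      _ ≤ 1 - 2 * (D - ε/2) := by linarith
      _ = 1 - 2 * D + ε := by ring
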